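/- arXiv:2404.12998 — 2 statements merged into one kernel-verified Lean document; each statement's English description precedes it below -/
import Mathlib

section
/- Let L be an n-dimensional nilpotent Lie algebra of coclass 3 (i.e., of nilpotency class n − 3) over a field 𝔽 of characteristic different from 2, with n ≥ 6. Suppose one of the following holds: (i) dim Z(L) ≠ 1; (ii) dim Z(L) = 1 and 2 ≤ dim Z₂(L) ≤ 3; (iii) dim Z(L) = 1, dim Z₂(L) = 4, and n − 3 ≤ dim L' ≤ n − 2. Then Z₂(L) is abelian, i.e., ⁅a, b⁆ = 0 for all a, b ∈ Z₂(L). -/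
/-- The second center `Z₂(L) = {x ∈ L : ⁅x, y⁆ ∈ Z(L) for all y ∈ L}` of a Lie algebra `L`,
as a Lie subalgebra of `L`. -/
def secondCenter (F L : Type*) [Field F] [LieRing L] [LieAlgebra F L] : LieSubalgebra F L where
  carrier := {x : L | ∀ y : L, ⁅x, y⁆ ∈ LieAlgebra.center F L}
  add_mem' := fun {a b} ha hb y => by
    rw [add_lie]; exact add_mem (ha y) (hb y)
  zero_mem' := fun y => by rw [zero_lie]; exact zero_mem _
  smul_mem' := fun c {x} hx y => by
    rw [smul_lie]; exact Submodule.smul_mem _ c (hx y)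
  lie_mem' := fun {a b} ha hb y => by
    have h1 : ⁅a, ⁅b, y⁆⁆ = 0 := (LieModule.mem_maxTrivSubmodule F L L ⁅b, y⁆).mp (hb y) a
    have h2 : ⁅b, ⁅a, y⁆⁆ = 0 := (LieModule.mem_maxTrivSubmodule F L L ⁅a, y⁆).mp (ha y) b
    have h3 : ⁅⁅a, b⁆, y⁆ = 0 := by rw [lie_lie, h1, h2, sub_zero]
    rw [h3]; exact zero_mem _

open Module

section Aux

variable {F M : Type*} [Field F] [LieRing M] [LieAlgebra F M]

private lemma lcs_bot_of_succ_eq {N i : ℕ}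
    (hN : LieModule.lowerCentralSeries F M M N = ⊥)
    (h : LieModule.lowerCentralSeries F M M (i + 1) = LieModule.lowerCentralSeries F M M i) :
    LieModule.lowerCentralSeries F M M i = ⊥ := by
  have key : ∀ j, LieModule.lowerCentralSeries F M M (i + j)
      = LieModule.lowerCentralSeries F M M i := by
    intro j
    induction j with
    | zero => rfl
    | succ j ih =>
      rw [show i + (j + 1) = (i + j) + 1 from rfl, LieModule.lowerCentralSeries_succ, ih,
        ← LieModule.lowerCentralSeries_succ, h]
  have h1 : LieModule.lowerCentralSeries F M M (i + N)
      ≤ LieModule.lowerCentralSeries F M M N :=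
    LieModule.antitone_lowerCentralSeries F M M (Nat.le_add_left N i)
  rw [key N, hN, le_bot_iff] at h1
  exact h1

private lemma lie_toSub_lt {A B : LieSubmodule F M M} (h : A < B) :
    LieSubmodule.toSubmodule A < LieSubmodule.toSubmodule B := by
  rw [lt_iff_le_and_ne] at h ⊢
  exact ⟨(LieSubmodule.toSubmodule_le_toSubmodule _ _).mpr h.1,
    fun e => h.2 ((LieSubmodule.toSubmodule_inj _ _).mp e)⟩

private lemma finrank_lcs_descent [FiniteDimensional F M] {N : ℕ}
    (hN : LieModule.lowerCentralSeries F M M N = ⊥) :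
    ∀ (j i : ℕ), LieModule.lowerCentralSeries F M M (i + j) ≠ ⊥ →
      finrank F (LieSubmodule.toSubmodule (LieModule.lowerCentralSeries F M M (i + j))) + j
        ≤ finrank F (LieSubmodule.toSubmodule (LieModule.lowerCentralSeries F M M i)) := by
  intro j
  induction j with
  | zero => intro i _; simp
  | succ j ih =>
    intro i hne
    have hne' : LieModule.lowerCentralSeries F M M (i + j) ≠ ⊥ := by
      intro hb
      apply hne
      rw [← le_bot_iff, ← hb]
      exact LieModule.antitone_lowerCentralSeries F M M (by omega)
    have hlt : LieModule.lowerCentralSeries F M M (i + (j + 1))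
        < LieModule.lowerCentralSeries F M M (i + j) := by
      refine lt_of_le_of_ne (LieModule.antitone_lowerCentralSeries F M M (by omega)) ?_
      intro heq
      exact hne' (lcs_bot_of_succ_eq hN heq)
    have h1 := Submodule.finrank_lt_finrank_of_lt (lie_toSub_lt hlt)
    have h2 := ih i hne'
    omega

private lemma derived_le_lcs_two (x y w : M)
    (hx : ∀ m : M, ⁅x, m⁆ = 0) (hy : ∀ m : M, ⁅y, m⁆ = 0)
    (hspan : Submodule.span F {x, y, w}
      ⊔ LieSubmodule.toSubmodule (LieModule.lowerCentralSeries F M M 1) = ⊤) :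
    LieModule.lowerCentralSeries F M M 1 ≤ LieModule.lowerCentralSeries F M M 2 := by
  have hdecomp : ∀ v : M, ∃ (s t c : F) (d : M),
      d ∈ LieModule.lowerCentralSeries F M M 1 ∧ v = s • x + (t • y + (c • w + d)) := by
    intro v
    have hv : v ∈ Submodule.span F {x, y, w}
        ⊔ LieSubmodule.toSubmodule (LieModule.lowerCentralSeries F M M 1) := by
      rw [hspan]; exact Submodule.mem_top
    obtain ⟨sv, hs, d, hd, rfl⟩ := Submodule.mem_sup.mp hv
    obtain ⟨s, z1, hz1, rfl⟩ := Submodule.mem_span_insert.mp hs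
    obtain ⟨t, z2, hz2, rfl⟩ := Submodule.mem_span_insert.mp hz1
    obtain ⟨c, rfl⟩ := Submodule.mem_span_singleton.mp hz2
    exact ⟨s, t, c, d, (LieSubmodule.mem_toSubmodule _).mp hd, by abel⟩
  have hlie2 : ∀ (u d : M), d ∈ LieModule.lowerCentralSeries F M M 1 →
      ⁅u, d⁆ ∈ LieModule.lowerCentralSeries F M M 2 := by
    intro u d hd
    rw [show (2 : ℕ) = 1 + 1 from rfl, LieModule.lowerCentralSeries_succ]
    exact LieSubmodule.lie_mem_lie (LieSubmodule.mem_top u) hd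
  have hw2 : ∀ u : M, ⁅u, w⁆ ∈ LieModule.lowerCentralSeries F M M 2 := by
    intro u
    obtain ⟨s, t, c, d, hd, rfl⟩ := hdecomp u
    have h1 : ⁅s • x + (t • y + (c • w + d)), w⁆
        = s • ⁅x, w⁆ + (t • ⁅y, w⁆ + (c • ⁅w, w⁆ + ⁅d, w⁆)) := by
      simp [add_lie, smul_lie]
    rw [h1, hx, hy, lie_self, smul_zero, smul_zero, smul_zero, zero_add, zero_add, zero_add,
      ← lie_skew d w]
    exact neg_mem (hlie2 w d hd)
  have h10 : LieModule.lowerCentralSeries F M M 1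
      = ⁅(⊤ : LieIdeal F M), (⊤ : LieSubmodule F M M)⁆ := by
    rw [show (1 : ℕ) = 0 + 1 from rfl, LieModule.lowerCentralSeries_succ,
      LieModule.lowerCentralSeries_zero]
  rw [← LieSubmodule.toSubmodule_le_toSubmodule]
  nth_rewrite 1 [h10]
  rw [LieSubmodule.lieIdeal_oper_eq_linear_span']
  refine Submodule.span_le.mpr ?_
  rintro _ ⟨u, -, v, -, rfl⟩
  rw [SetLike.mem_coe, LieSubmodule.mem_toSubmodule]
  obtain ⟨s, t, c, d, hd, rfl⟩ := hdecomp v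
  have hexp : ⁅u, s • x + (t • y + (c • w + d))⁆
      = s • ⁅u, x⁆ + (t • ⁅u, y⁆ + (c • ⁅u, w⁆ + ⁅u, d⁆)) := by
    simp [lie_add, lie_smul]
  have hux : ⁅u, x⁆ = 0 := by rw [← lie_skew u x, hx u, neg_zero]
  have huy : ⁅u, y⁆ = 0 := by rw [← lie_skew u y, hy u, neg_zero]
  rw [hexp, hux, huy, smul_zero, smul_zero, zero_add, zero_add]
  exact add_mem (SMulMemClass.smul_mem c (hw2 u)) (hlie2 u d hd)

private lemma four_le_finrank_quotient [FiniteDimensional F M] {N : ℕ}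
    (hN : LieModule.lowerCentralSeries F M M N = ⊥)
    (h1 : LieModule.lowerCentralSeries F M M 1 ≠ ⊥)
    (x y : M) (hx : ∀ m : M, ⁅x, m⁆ = 0) (hy : ∀ m : M, ⁅y, m⁆ = 0)
    (hind : ∀ s t : F, s • x + t • y ∈ LieModule.lowerCentralSeries F M M 1 →
      s = 0 ∧ t = 0) :
    4 ≤ finrank F (M ⧸ LieSubmodule.toSubmodule (LieModule.lowerCentralSeries F M M 1)) := by
  by_contra hlt
  push_neg at hlt
  set p := LieSubmodule.toSubmodule (LieModule.lowerCentralSeries F M M 1) with hp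
  have hπ := p.mkQ_surjective
  have hli : LinearIndependent F ![p.mkQ x, p.mkQ y] := by
    rw [LinearIndependent.pair_iff]
    intro s t hst
    have h0 : p.mkQ (s • x + t • y) = 0 := by
      rw [map_add, map_smul, map_smul]; exact hst
    rw [Submodule.mkQ_apply, Submodule.Quotient.mk_eq_zero] at h0
    exact hind s t ((LieSubmodule.mem_toSubmodule _).mp h0)
  have hrange : Set.range ![p.mkQ x, p.mkQ y] = {p.mkQ x, p.mkQ y} := by
    ext z; simp [Fin.exists_fin_two, or_comm]
  have hS2 : finrank F (Submodule.span F {p.mkQ x, p.mkQ y}) = 2 := by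
    have := finrank_span_eq_card hli
    rw [hrange] at this
    simpa using this
  obtain ⟨w, hw⟩ : ∃ w : M, Submodule.span F {p.mkQ x, p.mkQ y, p.mkQ w} = ⊤ := by
    by_cases hS : Submodule.span F {p.mkQ x, p.mkQ y} = ⊤
    · refine ⟨y, ?_⟩
      rw [show ({p.mkQ x, p.mkQ y, p.mkQ y} : Set _) = {p.mkQ x, p.mkQ y} by
        simp [Set.insert_comm]]
      exact hS
    · obtain ⟨v, hv⟩ : ∃ v, v ∉ Submodule.span F {p.mkQ x, p.mkQ y} := by
        by_contra hc; push_neg at hc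
        exact hS (eq_top_iff.mpr fun z _ => hc z)
      obtain ⟨w, rfl⟩ := hπ v
      refine ⟨w, ?_⟩
      have hle : Submodule.span F {p.mkQ x, p.mkQ y}
          < Submodule.span F {p.mkQ x, p.mkQ y, p.mkQ w} := by
        refine lt_of_le_of_ne (Submodule.span_mono (by intro z hz; simp at hz ⊢; tauto)) ?_
        intro heq
        apply hv; rw [heq]
        exact Submodule.subset_span (by simp)
      have h3 := Submodule.finrank_lt_finrank_of_lt hle
      have h4 := Submodule.finrank_le (Submodule.span F {p.mkQ x, p.mkQ y, p.mkQ w})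
      exact Submodule.eq_top_of_finrank_eq (by omega)
  have hmap : Submodule.map p.mkQ (Submodule.span F {x, y, w})
      = Submodule.span F {p.mkQ x, p.mkQ y, p.mkQ w} := by
    rw [Submodule.map_span]; congr 1
    simp [Set.image_insert_eq]
  have hspan : Submodule.span F {x, y, w} ⊔ p = ⊤ := by
    have h5 := congrArg (Submodule.comap p.mkQ) (hmap.trans hw)
    rwa [Submodule.comap_map_eq, Submodule.ker_mkQ, Submodule.comap_top] at h5
  have hle := derived_le_lcs_two x y w hx hy hspan
  have heq : LieModule.lowerCentralSeries F M M 2 = LieModule.lowerCentralSeries F M M 1 :=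
    le_antisymm (LieModule.antitone_lowerCentralSeries F M M (by omega)) hle
  exact h1 (lcs_bot_of_succ_eq hN heq)

private def lieQuotMk {F L : Type*} [Field F] [LieRing L] [LieAlgebra F L]
    (I : LieIdeal F L) : L →ₗ⁅F⁆ L ⧸ I :=
  { I.toSubmodule.mkQ with map_lie' := rfl }

end Aux

/-- Let `L` be an `n`-dimensional nilpotent Lie algebra of coclass `3` (i.e. of nilpotency class
`n − 3`) over a field `𝔽` of characteristic different from `2`, with `n ≥ 6`. If one of the
following holds: (i) `dim Z(L) ≠ 1`; (ii) `dim Z(L) = 1` and `2 ≤ dim Z₂(L) ≤ 3`;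
(iii) `dim Z(L) = 1`, `dim Z₂(L) = 4` and `n − 3 ≤ dim L' ≤ n − 2`; then `Z₂(L)` is abelian,
i.e. `⁅a, b⁆ = 0` for all `a, b ∈ Z₂(L)`. -/
theorem second_center_abelian_of_coclass_three {F L : Type*} [Field F] [LieRing L]
    [LieAlgebra F L] [FiniteDimensional F L] (hchar : ringChar F ≠ 2)
    (n : ℕ) (hn : Module.finrank F L = n) (hn6 : 6 ≤ n)
    (hclass : LieModule.lowerCentralSeries F L L (n - 3) = ⊥)
    (hclass' : LieModule.lowerCentralSeries F L L (n - 4) ≠ ⊥)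
    (hyp :
      Module.finrank F ↥(LieAlgebra.center F L) ≠ 1 ∨
      (Module.finrank F ↥(LieAlgebra.center F L) = 1 ∧
        2 ≤ Module.finrank F ↥(secondCenter F L) ∧
        Module.finrank F ↥(secondCenter F L) ≤ 3) ∨
      (Module.finrank F ↥(LieAlgebra.center F L) = 1 ∧
        Module.finrank F ↥(secondCenter F L) = 4 ∧
        n - 3 ≤ Module.finrank F ↥(LieModule.lowerCentralSeries F L L 1) ∧
        Module.finrank F ↥(LieModule.lowerCentralSeries F L L 1) ≤ n - 2)) :
    ∀ a ∈ secondCenter F L, ∀ b ∈ secondCenter F L, ⁅a, b⁆ = 0 := by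
  intro a ha b hb
  by_contra hab
  have hmem2 : ∀ z : L, z ∈ secondCenter F L → ∀ yy : L, ⁅z, yy⁆ ∈ LieAlgebra.center F L :=
    fun z hz => hz
  have hcenter : ∀ z : L, z ∈ LieAlgebra.center F L → ∀ v : L, ⁅v, z⁆ = 0 :=
    fun z hz => (LieModule.mem_maxTrivSubmodule F L L z).mp hz
  have hcenter' : ∀ z : L, z ∈ LieAlgebra.center F L → ∀ v : L, ⁅z, v⁆ = 0 := by
    intro z hz v
    rw [← lie_skew z v, hcenter z hz v, neg_zero]
  -- `C (n-4) ≤ Z`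
  have hC4Z : LieModule.lowerCentralSeries F L L (n - 4) ≤ LieAlgebra.center F L := by
    intro m hm
    rw [LieModule.mem_maxTrivSubmodule]
    intro v
    have h1 : ⁅v, m⁆ ∈ LieModule.lowerCentralSeries F L L (n - 4 + 1) := by
      rw [LieModule.lowerCentralSeries_succ]
      exact LieSubmodule.lie_mem_lie (LieSubmodule.mem_top v) hm
    rw [show n - 4 + 1 = n - 3 by omega, hclass] at h1
    exact (LieSubmodule.mem_bot _).mp h1
  have hsucc_bot : ∀ i : ℕ, LieModule.lowerCentralSeries F L L i ≤ LieAlgebra.center F L →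
      LieModule.lowerCentralSeries F L L (i + 1) = ⊥ := by
    intro i hle
    rw [LieModule.lowerCentralSeries_succ, ← le_bot_iff,
      ← LieSubmodule.toSubmodule_le_toSubmodule, LieSubmodule.lieIdeal_oper_eq_linear_span']
    refine Submodule.span_le.mpr ?_
    rintro _ ⟨u, -, v, hv, rfl⟩
    rw [SetLike.mem_coe, LieSubmodule.bot_toSubmodule, Submodule.mem_bot]
    exact hcenter v (hle hv) u
  have hC5 : ¬ LieModule.lowerCentralSeries F L L (n - 5) ≤ LieAlgebra.center F L := by
    intro hle
    apply hclass'
    have h2 := hsucc_bot (n - 5) hle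
    rwa [show n - 5 + 1 = n - 4 by omega] at h2
  have hC1 : ¬ LieModule.lowerCentralSeries F L L 1 ≤ LieAlgebra.center F L := by
    intro hle
    apply hclass'
    rw [← le_bot_iff, ← hsucc_bot 1 hle]
    exact LieModule.antitone_lowerCentralSeries F L L (by omega)
  have hC1bot : LieModule.lowerCentralSeries F L L 1 ≠ ⊥ := by
    intro h; exact hC1 (h ▸ bot_le)
  -- the second center centralizes the derived subalgebra
  have hZ2C1 : ∀ u ∈ secondCenter F L, ∀ d ∈ LieModule.lowerCentralSeries F L L 1,
      ⁅u, d⁆ = 0 := by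
    intro u hu d hd
    have h10 : LieSubmodule.toSubmodule (LieModule.lowerCentralSeries F L L 1)
        = Submodule.span F {m | ∃ x ∈ (⊤ : LieIdeal F L), ∃ nn ∈ (⊤ : LieSubmodule F L L),
            ⁅x, nn⁆ = m} := by
      rw [show (1 : ℕ) = 0 + 1 from rfl, LieModule.lowerCentralSeries_succ,
        LieModule.lowerCentralSeries_zero, LieSubmodule.lieIdeal_oper_eq_linear_span']
    have hd' : d ∈ Submodule.span F {m | ∃ x ∈ (⊤ : LieIdeal F L),
        ∃ nn ∈ (⊤ : LieSubmodule F L L), ⁅x, nn⁆ = m} := by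
      rw [← h10]; exact (LieSubmodule.mem_toSubmodule _).mpr hd
    clear hd
    induction hd' using Submodule.span_induction with
    | mem m hmemm =>
      obtain ⟨xx, -, nn, -, rfl⟩ := hmemm
      rw [leibniz_lie u xx nn, hcenter' _ (hmem2 u hu xx) nn, hcenter _ (hmem2 u hu nn) xx,
        add_zero]
    | zero => exact lie_zero u
    | add v w' hv hw hpv hpw => rw [lie_add, hpv, hpw, add_zero]
    | smul c v hv hpv => rw [lie_smul, hpv, smul_zero]
  -- independence of a, b modulo L' + Z
  have hba : ⁅b, a⁆ ≠ 0 := by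
    intro h; apply hab; rw [← lie_skew a b, h, neg_zero]
  have hind : ∀ s t : F, s • a + t • b ∈
      LieSubmodule.toSubmodule (LieModule.lowerCentralSeries F L L 1)
        ⊔ LieSubmodule.toSubmodule (LieAlgebra.center F L) → s = 0 ∧ t = 0 := by
    intro s t hst
    obtain ⟨d, hd, ζ, hζ, heq⟩ := Submodule.mem_sup.mp hst
    have hdb : ⁅d, b⁆ = 0 := by
      rw [← lie_skew d b, hZ2C1 b hb d ((LieSubmodule.mem_toSubmodule _).mp hd), neg_zero]
    have hζb : ⁅ζ, b⁆ = 0 := hcenter' ζ ((LieSubmodule.mem_toSubmodule _).mp hζ) b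
    have hda : ⁅d, a⁆ = 0 := by
      rw [← lie_skew d a, hZ2C1 a ha d ((LieSubmodule.mem_toSubmodule _).mp hd), neg_zero]
    have hζa : ⁅ζ, a⁆ = 0 := hcenter' ζ ((LieSubmodule.mem_toSubmodule _).mp hζ) a
    have h2 : ⁅s • a + t • b, b⁆ = 0 := by rw [← heq, add_lie, hdb, hζb, add_zero]
    rw [add_lie, smul_lie, smul_lie, lie_self, smul_zero, add_zero] at h2
    have hs0 : s = 0 := by
      rcases smul_eq_zero.mp h2 with h | h
      · exact h
      · exact absurd h hab
    have h3 : ⁅s • a + t • b, a⁆ = 0 := by rw [← heq, add_lie, hda, hζa, add_zero]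
    rw [add_lie, smul_lie, smul_lie, lie_self, smul_zero, zero_add] at h3
    have ht0 : t = 0 := by
      rcases smul_eq_zero.mp h3 with h | h
      · exact h
      · exact absurd h hba
    exact ⟨hs0, ht0⟩
  -- the quotient by the center
  have hsurj : Function.Surjective (lieQuotMk (F := F) (LieAlgebra.center F L)) :=
    (LieSubmodule.toSubmodule (LieAlgebra.center F L)).mkQ_surjective
  haveI hfdQ : FiniteDimensional F (L ⧸ (LieAlgebra.center F L : LieIdeal F L)) :=
    inferInstanceAs (FiniteDimensional F
      (L ⧸ LieSubmodule.toSubmodule (LieAlgebra.center F L)))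
  have hlcsQ : ∀ i, LieSubmodule.toSubmodule
      (LieModule.lowerCentralSeries F (L ⧸ (LieAlgebra.center F L : LieIdeal F L))
        (L ⧸ (LieAlgebra.center F L : LieIdeal F L)) i)
      = Submodule.map (LieSubmodule.toSubmodule (LieAlgebra.center F L)).mkQ
          (LieSubmodule.toSubmodule (LieModule.lowerCentralSeries F L L i)) := by
    intro i
    rw [← LieIdeal.lowerCentralSeries_map_eq i hsurj,
      LieIdeal.coe_map_of_surjective hsurj]
    rfl
  have hker : LieHom.ker (lieQuotMk (F := F) (LieAlgebra.center F L))
      = LieAlgebra.center F L := by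
    ext z
    rw [LieHom.mem_ker]
    exact Submodule.Quotient.mk_eq_zero _
  have hbotQ : ∀ i, (LieModule.lowerCentralSeries F
      (L ⧸ (LieAlgebra.center F L : LieIdeal F L))
      (L ⧸ (LieAlgebra.center F L : LieIdeal F L)) i = ⊥
      ↔ LieModule.lowerCentralSeries F L L i ≤ LieAlgebra.center F L) := by
    intro i
    rw [← LieIdeal.lowerCentralSeries_map_eq i hsurj, LieIdeal.map_eq_bot_iff, hker]
  have hQN : LieModule.lowerCentralSeries F (L ⧸ (LieAlgebra.center F L : LieIdeal F L))
      (L ⧸ (LieAlgebra.center F L : LieIdeal F L)) (n - 4) = ⊥ := (hbotQ (n - 4)).mpr hC4Z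
  have hQ1 : LieModule.lowerCentralSeries F (L ⧸ (LieAlgebra.center F L : LieIdeal F L))
      (L ⧸ (LieAlgebra.center F L : LieIdeal F L)) 1 ≠ ⊥ := fun h => hC1 ((hbotQ 1).mp h)
  have hQ5 : LieModule.lowerCentralSeries F (L ⧸ (LieAlgebra.center F L : LieIdeal F L))
      (L ⧸ (LieAlgebra.center F L : LieIdeal F L)) (n - 5) ≠ ⊥ :=
    fun h => hC5 ((hbotQ (n - 5)).mp h)
  -- the images of a and b in the quotient
  have hmkSurj : Function.Surjective
      (LieSubmodule.Quotient.mk (N := (LieAlgebra.center F L : LieIdeal F L))) := by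
    intro q
    exact Quotient.inductionOn' q fun v => ⟨v, (LieSubmodule.Quotient.is_quotient_mk v).symm⟩
  have hxQ : ∀ u : L, u ∈ secondCenter F L →
      ∀ m : L ⧸ (LieAlgebra.center F L : LieIdeal F L),
      ⁅LieSubmodule.Quotient.mk (N := (LieAlgebra.center F L : LieIdeal F L)) u, m⁆ = 0 := by
    intro u hu m
    obtain ⟨v, rfl⟩ := hmkSurj m
    rw [← LieSubmodule.Quotient.mk_bracket, LieSubmodule.Quotient.mk_eq_zero']
    exact hmem2 u hu v
  have hindQ : ∀ s t : F,
      s • LieSubmodule.Quotient.mk (N := (LieAlgebra.center F L : LieIdeal F L)) a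
        + t • LieSubmodule.Quotient.mk (N := (LieAlgebra.center F L : LieIdeal F L)) b
      ∈ LieModule.lowerCentralSeries F (L ⧸ (LieAlgebra.center F L : LieIdeal F L))
          (L ⧸ (LieAlgebra.center F L : LieIdeal F L)) 1 → s = 0 ∧ t = 0 := by
    intro s t hst
    have e : (LieSubmodule.Quotient.mk (N := (LieAlgebra.center F L : LieIdeal F L))
        (s • a + t • b))
        = s • LieSubmodule.Quotient.mk (N := (LieAlgebra.center F L : LieIdeal F L)) a
          + t • LieSubmodule.Quotient.mk (N := (LieAlgebra.center F L : LieIdeal F L)) b := by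
      show Submodule.Quotient.mk _
        = s • Submodule.Quotient.mk _ + t • Submodule.Quotient.mk _
      rw [Submodule.Quotient.mk_add, Submodule.Quotient.mk_smul, Submodule.Quotient.mk_smul]
    rw [← e] at hst
    have hst2 := (LieSubmodule.mem_toSubmodule _).mpr hst
    rw [hlcsQ 1] at hst2
    obtain ⟨u, hu, huv⟩ := Submodule.mem_map.mp hst2
    have hdiff : u - (s • a + t • b) ∈ LieSubmodule.toSubmodule (LieAlgebra.center F L) := by
      rw [← Submodule.Quotient.eq]
      exact huv
    apply hind s t
    refine Submodule.mem_sup.mpr ⟨u, hu, -(u - (s • a + t • b)), neg_mem hdiff, by abel⟩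
  have h4 := four_le_finrank_quotient hQN hQ1
    (LieSubmodule.Quotient.mk (N := (LieAlgebra.center F L : LieIdeal F L)) a)
    (LieSubmodule.Quotient.mk (N := (LieAlgebra.center F L : LieIdeal F L)) b)
    (hxQ a ha) (hxQ b hb) hindQ
  -- dimension bookkeeping
  have hfr1 : finrank F ((L ⧸ (LieAlgebra.center F L : LieIdeal F L)) ⧸
        LieSubmodule.toSubmodule (LieModule.lowerCentralSeries F
          (L ⧸ (LieAlgebra.center F L : LieIdeal F L))
          (L ⧸ (LieAlgebra.center F L : LieIdeal F L)) 1))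
      + finrank F (LieSubmodule.toSubmodule (LieModule.lowerCentralSeries F
          (L ⧸ (LieAlgebra.center F L : LieIdeal F L))
          (L ⧸ (LieAlgebra.center F L : LieIdeal F L)) 1))
      = finrank F (L ⧸ (LieAlgebra.center F L : LieIdeal F L)) :=
    Submodule.finrank_quotient_add_finrank _
  have hfrQ : finrank F (L ⧸ (LieAlgebra.center F L : LieIdeal F L))
      + finrank F ↥(LieAlgebra.center F L) = n := by
    have h5 := Submodule.finrank_quotient_add_finrank
      (LieSubmodule.toSubmodule (LieAlgebra.center F L))
    rw [hn] at h5
    exact h5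
  haveI : LieRing.IsNilpotent L := LieModule.IsNilpotent.mk (R := F) (h := hclass)
  haveI : Nontrivial L := Module.nontrivial_of_finrank_pos (R := F) (by omega)
  have hz1 : 0 < finrank F ↥(LieAlgebra.center F L) := by
    haveI := LieAlgebra.non_trivial_center_of_isNilpotent (R := F) (L := L)
    exact Module.finrank_pos_iff.mpr inferInstance
  have hdesc := finrank_lcs_descent hQN (n - 6) 1
    (by rw [show 1 + (n - 6) = n - 5 by omega]; exact hQ5)
  rw [show 1 + (n - 6) = n - 5 by omega] at hdesc
  have hq5pos : 0 < finrank F (LieSubmodule.toSubmodule (LieModule.lowerCentralSeries F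
      (L ⧸ (LieAlgebra.center F L : LieIdeal F L))
      (L ⧸ (LieAlgebra.center F L : LieIdeal F L)) (n - 5))) := by
    haveI := (LieSubmodule.nontrivial_iff_ne_bot _ _ _).mpr hQ5
    exact Module.finrank_pos_iff.mpr inferInstance
  rcases hyp with hz | ⟨hz, h2le, h3le⟩ | ⟨hz, hz4, hd1, hd2⟩
  · -- case (i) : dim Z ≠ 1, so dim Z ≥ 2
    omega
  · -- case (ii) : dim Z = 1 and 2 ≤ dim Z₂ ≤ 3
    have hC5Z2 : ∀ m ∈ LieModule.lowerCentralSeries F L L (n - 5),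
        m ∈ secondCenter F L := by
      intro m hm
      show ∀ yy : L, ⁅m, yy⁆ ∈ LieAlgebra.center F L
      intro yy
      have h1 : ⁅yy, m⁆ ∈ LieModule.lowerCentralSeries F L L (n - 4) := by
        rw [show n - 4 = n - 5 + 1 by omega, LieModule.lowerCentralSeries_succ]
        exact LieSubmodule.lie_mem_lie (LieSubmodule.mem_top yy) hm
      rw [← lie_skew m yy]
      exact neg_mem (hC4Z h1)
    have hdesc5 := finrank_lcs_descent hclass 1 (n - 5)
      (by rw [show n - 5 + 1 = n - 4 by omega]; exact hclass')
    rw [show n - 5 + 1 = n - 4 by omega] at hdesc5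
    have hc4pos : 0 < finrank F
        (LieSubmodule.toSubmodule (LieModule.lowerCentralSeries F L L (n - 4))) := by
      haveI := (LieSubmodule.nontrivial_iff_ne_bot _ _ _).mpr hclass'
      exact Module.finrank_pos_iff.mpr inferInstance
    have hli : LinearIndependent F ![a, b] := by
      rw [LinearIndependent.pair_iff]
      intro s t hst0
      exact hind s t (by rw [hst0]; exact zero_mem _)
    have hrangeab : Set.range ![a, b] = {a, b} := by
      ext z; simp [Fin.exists_fin_two, or_comm]
    have hA2 : finrank F (Submodule.span F {a, b}) = 2 := by
      have h6 := finrank_span_eq_card hli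
      rw [hrangeab] at h6
      simpa using h6
    have hinf : Submodule.span F {a, b}
        ⊓ LieSubmodule.toSubmodule (LieModule.lowerCentralSeries F L L (n - 5)) = ⊥ := by
      rw [eq_bot_iff]
      rintro v ⟨hv1, hv2⟩
      obtain ⟨s, t, rfl⟩ := Submodule.mem_span_pair.mp hv1
      have hvC1 : s • a + t • b ∈
          LieSubmodule.toSubmodule (LieModule.lowerCentralSeries F L L 1)
            ⊔ LieSubmodule.toSubmodule (LieAlgebra.center F L) :=
        Submodule.mem_sup_left ((LieSubmodule.toSubmodule_le_toSubmodule _ _).mpr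
          (LieModule.antitone_lowerCentralSeries F L L (by omega)) hv2)
      obtain ⟨hs, ht⟩ := hind s t hvC1
      rw [hs, ht, zero_smul, zero_smul, add_zero]
      exact zero_mem _
    have hsupeq := Submodule.finrank_sup_add_finrank_inf_eq (Submodule.span F {a, b})
      (LieSubmodule.toSubmodule (LieModule.lowerCentralSeries F L L (n - 5)))
    rw [hinf, finrank_bot] at hsupeq
    have hle2 : Submodule.span F {a, b}
        ⊔ LieSubmodule.toSubmodule (LieModule.lowerCentralSeries F L L (n - 5))
        ≤ (secondCenter F L).toSubmodule := by
      apply sup_le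
      · rw [Submodule.span_le]
        intro z hz'
        rcases Set.mem_insert_iff.mp hz' with rfl | h
        · exact ha
        · rcases Set.mem_singleton_iff.mp h with rfl
          exact hb
      · intro z hz'
        exact hC5Z2 z ((LieSubmodule.mem_toSubmodule _).mp hz')
    have hmono := Submodule.finrank_mono hle2
    have hZ2eq : finrank F ↥(secondCenter F L)
        = finrank F (secondCenter F L).toSubmodule := rfl
    omega
  · -- case (iii)
    have hc4pos : 0 < finrank F
        (LieSubmodule.toSubmodule (LieModule.lowerCentralSeries F L L (n - 4))) := by
      haveI := (LieSubmodule.nontrivial_iff_ne_bot _ _ _).mpr hclass'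
      exact Module.finrank_pos_iff.mpr inferInstance
    have hzeq : finrank F ↥(LieAlgebra.center F L)
        = finrank F (LieSubmodule.toSubmodule (LieAlgebra.center F L)) := rfl
    have hZeq : LieSubmodule.toSubmodule (LieModule.lowerCentralSeries F L L (n - 4))
        = LieSubmodule.toSubmodule (LieAlgebra.center F L) :=
      Submodule.eq_of_le_of_finrank_le
        ((LieSubmodule.toSubmodule_le_toSubmodule _ _).mpr hC4Z) (by omega)
    have hZC1 : LieSubmodule.toSubmodule (LieAlgebra.center F L)
        ≤ LieSubmodule.toSubmodule (LieModule.lowerCentralSeries F L L 1) := by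
      rw [← hZeq]
      exact (LieSubmodule.toSubmodule_le_toSubmodule _ _).mpr
        (LieModule.antitone_lowerCentralSeries F L L (by omega))
    set Zsub := LieSubmodule.toSubmodule (LieAlgebra.center F L) with hZsub
    set C1sub := LieSubmodule.toSubmodule (LieModule.lowerCentralSeries F L L 1) with hC1sub
    have hrk := LinearMap.finrank_range_add_finrank_ker (Zsub.mkQ.comp C1sub.subtype)
    have hrange : LinearMap.range (Zsub.mkQ.comp C1sub.subtype)
        = Submodule.map Zsub.mkQ C1sub := by
      rw [LinearMap.range_comp, Submodule.range_subtype]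
    have hkereq : LinearMap.ker (Zsub.mkQ.comp C1sub.subtype)
        = Submodule.comap C1sub.subtype Zsub := by
      rw [LinearMap.ker_comp, Submodule.ker_mkQ]
    have hkerrank : finrank F (LinearMap.ker (Zsub.mkQ.comp C1sub.subtype)) = 1 := by
      rw [hkereq, LinearEquiv.finrank_eq (Submodule.comapSubtypeEquivOfLe hZC1)]
      omega
    rw [hrange, hkerrank] at hrk
    have hlink : finrank F (LieSubmodule.toSubmodule (LieModule.lowerCentralSeries F
        (L ⧸ (LieAlgebra.center F L : LieIdeal F L))
        (L ⧸ (LieAlgebra.center F L : LieIdeal F L)) 1)) + 1 = finrank F C1sub := by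
      rw [hlcsQ 1]
      exact hrk
    have hC1rk : finrank F ↥(LieModule.lowerCentralSeries F L L 1)
        = finrank F C1sub := rfl
    omega
end

section
/- Let L be an n-dimensional nilpotent Lie algebra of coclass 3 (i.e., of nilpotency class n − 3) over a field 𝔽 of characteristic different from 2, with n ≥ 6. If the second center Z₂(L), regarded as a Lie algebra, has nilpotency class equal to 2, then either Z₂(L) is abelian, or dim Z(L) = 1, dim Z₂(L) = 4 and dim L' = n − 4. -/
open LieModule Module

section Helpers

variable {F V : Type*} [Field F] [AddCommGroup V] [Module F V] [FiniteDimensional F V]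

/-- If no single extra vector brings `W` to the whole space, then `W` has codimension `≥ 2`. -/
lemma aux_codim_two (W : Submodule F V)
    (h : ∀ x : V, W ⊔ Submodule.span F {x} ≠ ⊤) :
    Module.finrank F W + 2 ≤ Module.finrank F V := by
  by_contra hc
  push_neg at hc
  have hWt : W ≠ ⊤ := by
    intro hW
    exact h 0 (by rw [hW, top_sup_eq])
  obtain ⟨x, hx⟩ : ∃ x : V, x ∉ W := by
    by_contra hx; push_neg at hx
    exact hWt (Submodule.eq_top_iff'.mpr hx)
  have hlt : W < W ⊔ Submodule.span F {x} :=
    lt_of_le_of_ne le_sup_left fun he =>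
      hx (he ▸ (le_sup_right : _ ≤ W ⊔ Submodule.span F {x})
        (Submodule.mem_span_singleton_self x))
  have h1 := Submodule.finrank_lt_finrank_of_lt hlt
  have h2 : Module.finrank F ↥(W ⊔ Submodule.span F {x}) ≤ Module.finrank F V :=
    (W ⊔ Submodule.span F {x}).finrank_le
  have hW : Module.finrank F ↥W < Module.finrank F V := by
    have := Submodule.finrank_lt_finrank_of_lt (lt_of_le_of_ne le_top hWt)
    rwa [finrank_top] at this
  have h3 : Module.finrank F ↥(W ⊔ Submodule.span F {x}) = Module.finrank F V := by omega
  exact h x (Submodule.eq_top_of_finrank_eq h3)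

/-- Strict inclusion of submodules bumps `finrank`. -/
lemma aux_step {V1 V2 : Submodule F V} (x : V) (hle : V1 ≤ V2) (hx2 : x ∈ V2) (hx1 : x ∉ V1) :
    Module.finrank F V1 + 1 ≤ Module.finrank F V2 :=
  Submodule.finrank_lt_finrank_of_lt (lt_of_le_of_ne hle fun h => hx1 (h ▸ hx2))

end Helpers

section LieHelpers

variable {F L : Type*} [Field F] [LieRing L] [LieAlgebra F L]

lemma aux_lcs_stab (k : ℕ)
    (h : lowerCentralSeries F L L (k + 1) = lowerCentralSeries F L L k) (m : ℕ) :
    lowerCentralSeries F L L (k + m) = lowerCentralSeries F L L k := by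
  induction m with
  | zero => rfl
  | succ m ih =>
    show lowerCentralSeries F L L ((k + m) + 1) = _
    rw [lowerCentralSeries_succ, ih, ← lowerCentralSeries_succ, h]

end LieHelpers



/-- Let `L` be an `n`-dimensional nilpotent Lie algebra of coclass `3` (i.e. of nilpotency class
`n − 3`) over a field `𝔽` of characteristic different from `2`, with `n ≥ 6`. If the second
center `Z₂(L)`, regarded as a Lie algebra, has nilpotency class equal to `2`, then either
`Z₂(L)` is abelian, or `dim Z(L) = 1`, `dim Z₂(L) = 4` and `dim L' = n − 4`. -/
theorem second_center_structure_of_class_two {F L : Type*} [Field F] [LieRing L]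
    [LieAlgebra F L] [FiniteDimensional F L] (hchar : ringChar F ≠ 2)
    (n : ℕ) (hn : Module.finrank F L = n) (hn6 : 6 ≤ n)
    (hclass : LieModule.lowerCentralSeries F L L (n - 3) = ⊥)
    (hclass' : LieModule.lowerCentralSeries F L L (n - 4) ≠ ⊥)
    (hZ2 : LieModule.lowerCentralSeries F ↥(secondCenter F L) ↥(secondCenter F L) 2 = ⊥ ∧
        LieModule.lowerCentralSeries F ↥(secondCenter F L) ↥(secondCenter F L) 1 ≠ ⊥) :
    (∀ a ∈ secondCenter F L, ∀ b ∈ secondCenter F L, ⁅a, b⁆ = 0) ∨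
      (Module.finrank F ↥(LieAlgebra.center F L) = 1 ∧
        Module.finrank F ↥(secondCenter F L) = 4 ∧
        Module.finrank F ↥(LieModule.lowerCentralSeries F L L 1) = n - 4) := by
  classical
  by_cases hab : ∀ a ∈ secondCenter F L, ∀ b ∈ secondCenter F L, ⁅a, b⁆ = 0
  · exact Or.inl hab
  right
  push_neg at hab
  obtain ⟨a, ha, b, hb, hzne⟩ := hab
  have ha' : ∀ y : L, ⁅a, y⁆ ∈ LieAlgebra.center F L := ha
  have hb' : ∀ y : L, ⁅b, y⁆ ∈ LieAlgebra.center F L := hb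
  obtain ⟨p, rfl⟩ : ∃ p, n = p + 6 := ⟨n - 6, by omega⟩
  have hclass3 : lowerCentralSeries F L L (p + 3) = ⊥ := by
    have e : p + 6 - 3 = p + 3 := by omega
    rwa [e] at hclass
  have hclassp2 : lowerCentralSeries F L L (p + 2) ≠ ⊥ := by
    have e : p + 6 - 4 = p + 2 := by omega
    rwa [e] at hclass'
  clear hclass hclass'
  -- center basics
  have hcen0 : ∀ x ∈ LieAlgebra.center F L, ∀ y : L, ⁅y, x⁆ = 0 := fun x hx y =>
    (LieModule.mem_maxTrivSubmodule F L L x).mp hx y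
  have hcen0' : ∀ x ∈ LieAlgebra.center F L, ∀ y : L, ⁅x, y⁆ = 0 := fun x hx y => by
    rw [← lie_skew, hcen0 x hx y, neg_zero]
  -- elements of the second center kill the derived subalgebra
  have key : ∀ x : L, (∀ y : L, ⁅x, y⁆ ∈ LieAlgebra.center F L) →
      ∀ u ∈ lowerCentralSeries F L L 1, ⁅x, u⁆ = 0 := by
    intro x hx
    let C : LieSubmodule F L L :=
      { carrier := {y : L | ⁅x, y⁆ = 0}
        add_mem' := fun {y z} hy hz => by
          have hy' : ⁅x, y⁆ = 0 := hy
          have hz' : ⁅x, z⁆ = 0 := hz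
          show ⁅x, y + z⁆ = 0
          rw [lie_add, hy', hz', add_zero]
        zero_mem' := by show ⁅x, (0 : L)⁆ = 0; rw [lie_zero]
        smul_mem' := fun t {y} hy => by
          have hy' : ⁅x, y⁆ = 0 := hy
          show ⁅x, t • y⁆ = 0
          rw [lie_smul, hy', smul_zero]
        lie_mem := fun {u y} hy => by
          have hy' : ⁅x, y⁆ = 0 := hy
          show ⁅x, ⁅u, y⁆⁆ = 0
          have h1 : ⁅y, ⁅x, u⁆⁆ = 0 := hcen0 _ (hx u) y
          rw [leibniz_lie, hy', lie_zero, add_zero, ← lie_skew, h1, neg_zero] }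
    have hle : lowerCentralSeries F L L 1 ≤ C := by
      rw [lowerCentralSeries_succ, lowerCentralSeries_zero, LieSubmodule.lie_le_iff]
      intro u _ m _
      show ⁅x, ⁅u, m⁆⁆ = 0
      have h1 : ⁅m, ⁅x, u⁆⁆ = 0 := hcen0 _ (hx u) m
      have h2 : ⁅u, ⁅x, m⁆⁆ = 0 := hcen0 _ (hx m) u
      rw [leibniz_lie, h2, add_zero, ← lie_skew, h1, neg_zero]
    intro u hu
    exact hle hu
  -- the (p+2)-nd term of the lower central series is central
  have hc32 : ∀ u ∈ lowerCentralSeries F L L (p + 2), u ∈ LieAlgebra.center F L := by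
    intro u hu
    rw [LieModule.mem_maxTrivSubmodule]
    intro y
    have hmem : ⁅y, u⁆ ∈ lowerCentralSeries F L L (p + 3) := by
      rw [lowerCentralSeries_succ]
      exact LieSubmodule.lie_mem_lie (LieSubmodule.mem_top y) hu
    rw [hclass3, LieSubmodule.mem_bot] at hmem
    exact hmem
  -- a noncentral element of the (p+1)-st term
  obtain ⟨w, hw1, hw2⟩ : ∃ w ∈ lowerCentralSeries F L L (p + 1), w ∉ LieAlgebra.center F L := by
    by_contra hcon; push_neg at hcon
    apply hclassp2
    rw [show p + 2 = (p + 1) + 1 from rfl, lowerCentralSeries_succ, eq_bot_iff,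
      LieSubmodule.lie_le_iff]
    intro x _ m hm
    rw [LieSubmodule.mem_bot]
    exact hcen0 m (hcon m hm) x
  -- upper central series
  set U : ℕ → LieSubmodule F L L := fun k => (⊥ : LieSubmodule F L L).ucs k with hU
  have hUsucc : ∀ k, U (k + 1) = (U k).normalizer := fun k => LieSubmodule.ucs_succ ⊥ k
  have hU1 : U 1 = LieAlgebra.center F L := LieSubmodule.ucs_bot_one
  have hmemU2 : ∀ x : L, (∀ y : L, ⁅x, y⁆ ∈ LieAlgebra.center F L) → x ∈ U 2 := by
    intro x hx
    rw [show (2 : ℕ) = 1 + 1 from rfl, hUsucc 1, LieSubmodule.mem_normalizer]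
    intro y
    rw [hU1, ← lie_skew]
    exact neg_mem (hx y)
  have haU2 : a ∈ U 2 := hmemU2 a ha'
  have hbU2 : b ∈ U 2 := hmemU2 b hb'
  have hwU2 : w ∈ U 2 := by
    refine hmemU2 w fun y => ?_
    rw [← lie_skew]
    refine neg_mem (hc32 _ ?_)
    rw [show p + 2 = (p + 1) + 1 from rfl, lowerCentralSeries_succ]
    exact LieSubmodule.lie_mem_lie (LieSubmodule.mem_top y) hw1
  have hZU2 : (LieAlgebra.center F L : LieSubmodule F L L) ≤ U 2 := by
    rw [← hU1, show (2 : ℕ) = 1 + 1 from rfl, hUsucc 1]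
    exact LieSubmodule.le_normalizer _
  -- chain inside U 2 : center < center + a < center + a + b < center + a + b + w
  set z : L := ⁅a, b⁆ with hzdef
  have hzZ : z ∈ LieAlgebra.center F L := ha' b
  have hw1' : w ∈ lowerCentralSeries F L L 1 :=
    LieModule.antitone_lowerCentralSeries F L L (show 1 ≤ p + 1 by omega) hw1
  have haw : ⁅a, w⁆ = 0 := key a ha' w hw1'
  have hbw : ⁅b, w⁆ = 0 := key b hb' w hw1'
  set sZ : Submodule F L := ((LieAlgebra.center F L : LieSubmodule F L L) : Submodule F L)
    with hsZ
  have hmemsZ : ∀ x : L, x ∈ sZ ↔ x ∈ LieAlgebra.center F L := fun x => Iff.rfl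
  set S1 : Submodule F L := sZ ⊔ Submodule.span F {a} with hS1
  set S2 : Submodule F L := S1 ⊔ Submodule.span F {b} with hS2
  have haZ : a ∉ sZ := by
    intro h
    exact hzne (hcen0' a ((hmemsZ a).mp h) b)
  have hbS1 : b ∉ S1 := by
    intro h
    obtain ⟨zc, hzc, u, hu, hub⟩ := Submodule.mem_sup.mp h
    obtain ⟨α, rfl⟩ := Submodule.mem_span_singleton.mp hu
    apply hzne
    rw [hzdef, ← hub, lie_add, lie_smul, lie_self, smul_zero, add_zero]
    exact hcen0 zc ((hmemsZ zc).mp hzc) a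
  have hwS2 : w ∉ S2 := by
    intro h
    obtain ⟨s, hs, u, hu, hsw⟩ := Submodule.mem_sup.mp h
    obtain ⟨β, rfl⟩ := Submodule.mem_span_singleton.mp hu
    obtain ⟨zc, hzc, v, hv, hvs⟩ := Submodule.mem_sup.mp hs
    obtain ⟨α, rfl⟩ := Submodule.mem_span_singleton.mp hv
    have hzc' : zc ∈ LieAlgebra.center F L := (hmemsZ zc).mp hzc
    have hwe : w = zc + α • a + β • b := by rw [← hsw, ← hvs]
    have hβ : β = 0 := by
      have h0 : ⁅a, w⁆ = β • z := by
        rw [hwe, lie_add, lie_add, lie_smul, lie_smul, lie_self, smul_zero, add_zero,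
          hcen0 zc hzc' a, zero_add, hzdef]
      have := h0.symm.trans haw
      rcases smul_eq_zero.mp this with h | h
      · exact h
      · exact absurd h hzne
    have hα : α = 0 := by
      have h0 : ⁅b, w⁆ = α • (-z) := by
        rw [hwe, hβ, zero_smul, add_zero, lie_add, lie_smul,
          hcen0 zc hzc' b, zero_add, hzdef, lie_skew]
      have := h0.symm.trans hbw
      rcases smul_eq_zero.mp this with h | h
      · exact h
      · exact absurd (neg_eq_zero.mp h) hzne
    apply hw2
    rw [hwe, hα, hβ, zero_smul, zero_smul, add_zero, add_zero]
    exact hzc'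
  -- dim Z + 3 ≤ dim U2
  set sU2 : Submodule F L := ((U 2 : LieSubmodule F L L) : Submodule F L) with hsU2
  have hS2le : S2 ≤ sU2 := by
    rw [hS2, hS1]
    refine sup_le (sup_le ?_ ?_) ?_
    · exact (LieSubmodule.toSubmodule_le_toSubmodule _ _).mpr hZU2
    · rw [Submodule.span_singleton_le_iff_mem]; exact haU2
    · rw [Submodule.span_singleton_le_iff_mem]; exact hbU2
  have hB : Module.finrank F sZ + 3 ≤ Module.finrank F sU2 := by
    have h1 : Module.finrank F sZ + 1 ≤ Module.finrank F S1 :=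
      aux_step a le_sup_left (Submodule.mem_sup_right (Submodule.mem_span_singleton_self a)) haZ
    have h2 : Module.finrank F S1 + 1 ≤ Module.finrank F S2 :=
      aux_step b le_sup_left (Submodule.mem_sup_right (Submodule.mem_span_singleton_self b)) hbS1
    have h3 : Module.finrank F S2 + 1 ≤ Module.finrank F sU2 :=
      aux_step w hS2le hwU2 hwS2
    omega
  have hr1 : 1 ≤ Module.finrank F sZ := by
    have h0 : z ∈ sZ := hzZ
    have h1 : z ∉ (⊥ : Submodule F L) := by
      rw [Submodule.mem_bot]; exact hzne
    have := aux_step z bot_le h0 h1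
    rwa [finrank_bot, zero_add] at this
  -- upper central series grows strictly
  set sU : ℕ → Submodule F L := fun k => ((U k : LieSubmodule F L L) : Submodule F L) with hsU
  have hUtop : U (p + 3) = ⊤ :=
    (LieSubmodule.ucs_eq_top_iff (N := (⊥ : LieSubmodule F L L)) (p + 3)).mpr hclass3.le
  have hUne : U (p + 2) ≠ ⊤ := by
    intro h
    exact hclassp2 (le_bot_iff.mp
      ((LieSubmodule.ucs_eq_top_iff (N := (⊥ : LieSubmodule F L L)) (p + 2)).mp h))
  have hUle : ∀ k m, k ≤ m → U k ≤ U m := by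
    intro k m hkm
    induction m, hkm using Nat.le_induction with
    | base => exact le_rfl
    | succ m hm ih =>
      refine ih.trans ?_
      rw [hUsucc m]
      exact LieSubmodule.le_normalizer _
  have hUstrict : ∀ k, k ≤ p + 2 →
      Module.finrank F (sU k) + 1 ≤ Module.finrank F (sU (k + 1)) := by
    intro k hk
    have hne : U k ≠ U (k + 1) := by
      intro h
      have hsn : (U k).normalizer = U k := by rw [← hUsucc k, ← h]
      have : U (p + 3) ≤ U k := LieSubmodule.ucs_le_of_normalizer_eq_self hsn (p + 3)
      rw [hUtop] at this
      exact hUne (top_le_iff.mp ((le_top.trans this).trans (hUle k (p + 2) hk)))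
    have hlt : sU k < sU (k + 1) := by
      refine lt_of_le_of_ne ((LieSubmodule.toSubmodule_le_toSubmodule _ _).mpr ?_) ?_
      · show U k ≤ U (k + 1)
        rw [hUsucc k]
        exact LieSubmodule.le_normalizer _
      · intro h
        exact hne ((LieSubmodule.toSubmodule_inj _ _).mp h)
    exact Submodule.finrank_lt_finrank_of_lt hlt
  have hC : Module.finrank F sU2 + p ≤ Module.finrank F (sU (p + 2)) := by
    have hchain : ∀ j, j ≤ p → Module.finrank F sU2 + j ≤ Module.finrank F (sU (2 + j)) := by
      intro j
      induction j with
      | zero => intro _; exact le_rfl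
      | succ j ih =>
        intro hj
        have h1 := ih (by omega)
        have h2 := hUstrict (2 + j) (by omega)
        have h3 : sU (2 + (j + 1)) = sU (2 + j + 1) := rfl
        rw [h3]
        omega
    have h := hchain p le_rfl
    rwa [Nat.add_comm 2 p] at h
  -- the top of the upper central series has codimension at least 2
  have htopjump : Module.finrank F (sU (p + 2)) + 2 ≤ p + 6 := by
    rw [← hn]
    apply aux_codim_two
    intro x hx
    apply hUne
    rw [eq_top_iff]
    intro y _
    rw [show p + 2 = (p + 1) + 1 from rfl, hUsucc (p + 1), LieSubmodule.mem_normalizer]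
    intro v
    have hdec : ∀ u : L, ∃ (m : L) (s : F), m ∈ U (p + 2) ∧ u = m + s • x := by
      intro u
      have hu : u ∈ sU (p + 2) ⊔ Submodule.span F {x} := by rw [hx]; trivial
      obtain ⟨m, hm, t, ht, hmt⟩ := Submodule.mem_sup.mp hu
      obtain ⟨s, rfl⟩ := Submodule.mem_span_singleton.mp ht
      exact ⟨m, s, hm, hmt.symm⟩
    obtain ⟨m2, s2, hm2, rfl⟩ := hdec y
    obtain ⟨m1, s1, hm1, rfl⟩ := hdec v
    have hm1' : ∀ u : L, ⁅u, m1⁆ ∈ U (p + 1) := by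
      rw [show p + 2 = (p + 1) + 1 from rfl, hUsucc (p + 1), LieSubmodule.mem_normalizer] at hm1
      exact hm1
    have hm2' : ∀ u : L, ⁅u, m2⁆ ∈ U (p + 1) := by
      rw [show p + 2 = (p + 1) + 1 from rfl, hUsucc (p + 1), LieSubmodule.mem_normalizer] at hm2
      exact hm2
    have e : ⁅m1 + s1 • x, m2 + s2 • x⁆
        = ⁅m1 + s1 • x, m2⁆ + (s2 • (⁅m1, x⁆ + s1 • ⁅x, x⁆)) := by
      rw [lie_add, lie_smul, add_lie, smul_lie, add_lie, smul_lie]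
    rw [e, lie_self, smul_zero, add_zero]
    refine add_mem (hm2' (m1 + s1 • x)) ?_
    have hmx : ⁅m1, x⁆ ∈ U (p + 1) := by
      rw [← lie_skew]
      exact neg_mem (hm1' x)
    exact Submodule.smul_mem ((U (p + 1) : LieSubmodule F L L) : Submodule F L) s2 hmx
  -- lower central series: strict decrease while nonzero
  set sL : ℕ → Submodule F L := fun k => ((lowerCentralSeries F L L k : LieSubmodule F L L) :
    Submodule F L) with hsL
  have hlcs_strict : ∀ k, lowerCentralSeries F L L (k + 1) ≠ ⊥ →
      Module.finrank F (sL (k + 1)) + 1 ≤ Module.finrank F (sL k) := by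
    intro k hk
    have hle : lowerCentralSeries F L L (k + 1) ≤ lowerCentralSeries F L L k :=
      antitone_lowerCentralSeries F L L (Nat.le_succ k)
    have hne : lowerCentralSeries F L L (k + 1) ≠ lowerCentralSeries F L L k := by
      intro h
      rcases le_or_gt k (p + 3) with hkp | hkp
      · obtain ⟨m, hm⟩ : ∃ m, k + m = p + 3 := ⟨p + 3 - k, by omega⟩
        have hst := aux_lcs_stab k h m
        rw [hm, hclass3] at hst
        exact hk (le_bot_iff.mp (hle.trans hst.ge))
      · exact hk (le_bot_iff.mp
          ((antitone_lowerCentralSeries F L L (by omega : p + 3 ≤ k + 1)).trans hclass3.le))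
    have hlt : sL (k + 1) < sL k := by
      refine lt_of_le_of_ne ((LieSubmodule.toSubmodule_le_toSubmodule _ _).mpr hle) ?_
      intro h
      exact hne ((LieSubmodule.toSubmodule_inj _ _).mp h)
    exact Submodule.finrank_lt_finrank_of_lt hlt
  have hlcsne : ∀ k, k ≤ p + 2 → lowerCentralSeries F L L k ≠ ⊥ := by
    intro k hk h
    exact hclassp2 (le_bot_iff.mp ((antitone_lowerCentralSeries F L L hk).trans h.le))
  have hDchain : ∀ j, j ≤ p + 1 →
      Module.finrank F (sL (1 + j)) + j ≤ Module.finrank F (sL 1) := by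
    intro j
    induction j with
    | zero => intro _; exact le_rfl
    | succ j ih =>
      intro hj
      have h1 := ih (by omega)
      have h2 := hlcs_strict (1 + j) (hlcsne (1 + j + 1) (by omega))
      have h3 : sL (1 + (j + 1)) = sL (1 + j + 1) := rfl
      rw [h3]
      omega
  have hDpos : 1 ≤ Module.finrank F (sL (p + 2)) := by
    rcases Nat.eq_zero_or_pos (Module.finrank F (sL (p + 2))) with h | h
    · exfalso
      apply hlcsne (p + 2) le_rfl
      have := Submodule.finrank_eq_zero.mp h
      rw [← LieSubmodule.toSubmodule_inj, LieSubmodule.bot_toSubmodule]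
      exact this
    · exact h
  have hD : p + 2 ≤ Module.finrank F (sL 1) := by
    have h := hDchain (p + 1) le_rfl
    have e : (1 : ℕ) + (p + 1) = p + 2 := by omega
    rw [e] at h
    omega
  -- upper bound for the derived subalgebra
  set T1 : Submodule F L := sL 1 ⊔ Submodule.span F {a} with hT1
  set T2 : Submodule F L := T1 ⊔ Submodule.span F {b} with hT2
  have haL : a ∉ sL 1 := by
    intro h
    apply hzne
    rw [hzdef, ← lie_skew, key b hb' a h, neg_zero]
  have hbT1 : b ∉ T1 := by
    intro h
    obtain ⟨u, hu, t, ht, htb⟩ := Submodule.mem_sup.mp h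
    obtain ⟨α, rfl⟩ := Submodule.mem_span_singleton.mp ht
    apply hzne
    rw [hzdef, ← htb, lie_add, lie_smul, lie_self, smul_zero, add_zero]
    exact key a ha' u hu
  have hT2low : Module.finrank F (sL 1) + 2 ≤ Module.finrank F T2 := by
    have h1 : Module.finrank F (sL 1) + 1 ≤ Module.finrank F T1 :=
      aux_step a le_sup_left (Submodule.mem_sup_right (Submodule.mem_span_singleton_self a)) haL
    have h2 : Module.finrank F T1 + 1 ≤ Module.finrank F T2 :=
      aux_step b le_sup_left (Submodule.mem_sup_right (Submodule.mem_span_singleton_self b)) hbT1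
    omega
  have hT2codim : Module.finrank F T2 + 2 ≤ p + 6 := by
    rw [← hn]
    apply aux_codim_two
    intro x hx
    -- decompose arbitrary elements
    have hdec4 : ∀ v : L, ∃ (u : L) (α β s : F),
        u ∈ lowerCentralSeries F L L 1 ∧ v = u + α • a + β • b + s • x := by
      intro v
      have hv : v ∈ T2 ⊔ Submodule.span F {x} := by rw [hx]; trivial
      obtain ⟨t2, ht2, t, ht, htv⟩ := Submodule.mem_sup.mp hv
      obtain ⟨s, rfl⟩ := Submodule.mem_span_singleton.mp ht
      obtain ⟨t1, ht1, r, hr, hrt⟩ := Submodule.mem_sup.mp ht2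
      obtain ⟨β, rfl⟩ := Submodule.mem_span_singleton.mp hr
      obtain ⟨u, hu, q, hq, hqt⟩ := Submodule.mem_sup.mp ht1
      obtain ⟨α, rfl⟩ := Submodule.mem_span_singleton.mp hq
      exact ⟨u, α, β, s, hu, by rw [← htv, ← hrt, ← hqt]⟩
    set N : LieSubmodule F L L :=
      lowerCentralSeries F L L 2 ⊔ (LieAlgebra.center F L : LieSubmodule F L L) with hN
    have hl2N : lowerCentralSeries F L L 2 ≤ N := le_sup_left
    have hZN : (LieAlgebra.center F L : LieSubmodule F L L) ≤ N := le_sup_right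
    have hmem2 : ∀ (v u1 : L), u1 ∈ lowerCentralSeries F L L 1 → ⁅v, u1⁆ ∈ N := by
      intro v u1 hu1
      apply hl2N
      rw [show (2 : ℕ) = 1 + 1 from rfl, LieModule.lowerCentralSeries_succ]
      exact LieSubmodule.lie_mem_lie (LieSubmodule.mem_top v) hu1
    -- first step : L¹ ≤ L² + Z
    have h12 : lowerCentralSeries F L L 1 ≤ N := by
      rw [LieModule.lowerCentralSeries_succ, lowerCentralSeries_zero, LieSubmodule.lie_le_iff]
      intro u' _ v' _
      obtain ⟨u1, α1, β1, s1, hu1, rfl⟩ := hdec4 u'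
      obtain ⟨u2, α2, β2, s2, hu2, rfl⟩ := hdec4 v'
      set v' : L := u2 + α2 • a + β2 • b + s2 • x with hv'
      have hxv : ⁅x, v'⁆ ∈ N := by
        rw [hv', lie_add, lie_add, lie_add, lie_smul, lie_smul, lie_smul, lie_self, smul_zero]
        refine add_mem (add_mem (add_mem (hmem2 x u2 hu2) ?_) ?_) ?_
        · refine Submodule.smul_mem (N : Submodule F L) _ ?_
          rw [← lie_skew]
          exact neg_mem (hZN (ha' x))
        · refine Submodule.smul_mem (N : Submodule F L) _ ?_
          rw [← lie_skew]
          exact neg_mem (hZN (hb' x))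
        · exact zero_mem _
      show ⁅u1 + α1 • a + β1 • b + s1 • x, v'⁆ ∈ N
      rw [add_lie, add_lie, add_lie, smul_lie, smul_lie, smul_lie]
      refine add_mem (add_mem (add_mem ?_ ?_) ?_) ?_
      · rw [← lie_skew]
        exact neg_mem (hmem2 v' u1 hu1)
      · exact Submodule.smul_mem (N : Submodule F L) _ (hZN (ha' v'))
      · exact Submodule.smul_mem (N : Submodule F L) _ (hZN (hb' v'))
      · exact Submodule.smul_mem (N : Submodule F L) _ hxv
    -- hence L² = L³ and the series stabilizes
    have h23 : lowerCentralSeries F L L 2 ≤ lowerCentralSeries F L L 3 := by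
      have e2 : lowerCentralSeries F L L 2 = ⁅(⊤ : LieIdeal F L), lowerCentralSeries F L L 1⁆ :=
        lowerCentralSeries_succ F L L 1
      have e3 : lowerCentralSeries F L L 3 = ⁅(⊤ : LieIdeal F L), lowerCentralSeries F L L 2⁆ :=
        lowerCentralSeries_succ F L L 2
      rw [e2, e3]
      calc ⁅(⊤ : LieIdeal F L), lowerCentralSeries F L L 1⁆
          ≤ ⁅(⊤ : LieIdeal F L), N⁆ := LieSubmodule.mono_lie_right _ h12
        _ = ⁅(⊤ : LieIdeal F L), lowerCentralSeries F L L 2⁆ ⊔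
              ⁅(⊤ : LieIdeal F L), (LieAlgebra.center F L : LieSubmodule F L L)⁆ := by
            rw [hN, LieSubmodule.lie_sup]
        _ ≤ ⁅(⊤ : LieIdeal F L), lowerCentralSeries F L L 2⁆ := by
            refine sup_le le_rfl ?_
            rw [LieSubmodule.lie_le_iff]
            intro x' _ m hm
            rw [hcen0 m hm x']
            exact zero_mem _
    have heq : lowerCentralSeries F L L 3 = lowerCentralSeries F L L 2 :=
      le_antisymm (antitone_lowerCentralSeries F L L (by omega)) h23
    have hst := aux_lcs_stab 2 heq (p + 1)
    have e : (2 : ℕ) + (p + 1) = p + 3 := by omega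
    rw [e, hclass3] at hst
    exact hclassp2 (le_bot_iff.mp
      ((antitone_lowerCentralSeries F L L (by omega : 2 ≤ p + 2)).trans hst.ge))
  have hE : Module.finrank F (sL 1) ≤ p + 2 := by omega
  -- identify the second center with U 2
  have hEq : (secondCenter F L).toSubmodule = sU2 := by
    ext x
    constructor
    · intro hx
      exact hmemU2 x hx
    · intro hx
      have hx' : ∀ y : L, ⁅y, x⁆ ∈ U 1 := by
        have hx2 : x ∈ U 2 := hx
        rw [show U 2 = (U 1).normalizer from hUsucc 1, LieSubmodule.mem_normalizer] at hx2
        exact hx2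
      intro y
      rw [← lie_skew]
      refine neg_mem ?_
      rw [← hU1]
      exact hx' y
  have hfin1 : Module.finrank F ↥(LieAlgebra.center F L) = Module.finrank F sZ := rfl
  have hfin2 : Module.finrank F ↥(secondCenter F L) = Module.finrank F sU2 := by
    have h0 : Module.finrank F ↥(secondCenter F L) =
        Module.finrank F (secondCenter F L).toSubmodule := rfl
    rw [h0, hEq]
  have hfin3 : Module.finrank F ↥(lowerCentralSeries F L L 1) = Module.finrank F (sL 1) := rfl
  refine ⟨?_, ?_, ?_⟩
  · rw [hfin1]; omega
  · rw [hfin2]; omega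
  · rw [hfin3]; omega
end
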